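/- Let φ : D → G be a homomorphism of abelian groups such that D is divisible and φ maps the torsion subgroup D_tors onto the torsion subgroup G_tors. Let K = ker φ and let K_t = ker(φ_tors) = K ∩ D_tors be the kernel of the restriction of φ to torsion. Then for every nonzero integer N, the inclusion K_t ⊆ K induces an isomorphism K_t/(N·K_t) ≅ K/(N·K). -/
import Mathlib


/-- The subgroup `N·M = {N • y : y ∈ M}` of `N`-multiples in an abelian group `M`,
for an integer `N`. -/
def zsmulSub (N : ℤ) (M : Type*) [AddCommGroup M] : AddSubgroup M where
  carrier := {x | ∃ y : M, N • y = x}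
  zero_mem' := ⟨0, smul_zero N⟩
  add_mem' := by
    rintro x y ⟨u, hu⟩ ⟨v, hv⟩
    exact ⟨u + v, by rw [smul_add, hu, hv]⟩
  neg_mem' := by
    rintro x ⟨u, hu⟩
    exact ⟨-u, by rw [smul_neg, hu]⟩

/-- The kernel of the restriction of `φ` to torsion, i.e. `ker φ ∩ D_tors`, as a subgroup
of `D`. -/
def torsKer {D G : Type*} [AddCommGroup D] [AddCommGroup G] (φ : D →+ G) : AddSubgroup D where
  carrier := {x | φ x = 0 ∧ ∃ n : ℕ, n ≠ 0 ∧ n • x = 0}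
  zero_mem' := ⟨map_zero φ, 1, one_ne_zero, smul_zero 1⟩
  add_mem' := by
    rintro x y ⟨hx0, n, hn, hnx⟩ ⟨hy0, m, hm, hmy⟩
    refine ⟨by rw [map_add, hx0, hy0, add_zero], n * m, mul_ne_zero hn hm, ?_⟩
    have hx : (n * m) • x = 0 := by rw [mul_comm, mul_smul, hnx, smul_zero]
    have hy : (n * m) • y = 0 := by rw [mul_smul, hmy, smul_zero]
    rw [smul_add, hx, hy, add_zero]
  neg_mem' := by
    rintro x ⟨hx0, n, hn, hnx⟩
    exact ⟨by rw [map_neg, hx0, neg_zero], n, hn, by rw [smul_neg, hnx, neg_zero]⟩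

/-- Remark 1.8: if `φ : D → G` is a homomorphism of abelian groups with `D` divisible and `φ`
surjective on torsion, then for any nonzero integer `N` the inclusion
`ker(φ_tors) ⊆ ker φ` induces an isomorphism `ker(φ_tors)/N ≅ ker(φ)/N`. -/
theorem torsion_kernel_mod_N {D G : Type*} [AddCommGroup D] [AddCommGroup G]
    (φ : D →+ G)
    (hD : ∀ (x : D) (n : ℤ), n ≠ 0 → ∃ y : D, n • y = x)
    (htors : ∀ g : G, (∃ n : ℕ, n ≠ 0 ∧ n • g = 0) →
      ∃ d : D, (∃ n : ℕ, n ≠ 0 ∧ n • d = 0) ∧ φ d = g)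
    (N : ℤ) (hN : N ≠ 0) :
    ∃ e : (torsKer φ ⧸ zsmulSub N (torsKer φ)) ≃+ (φ.ker ⧸ zsmulSub N φ.ker),
      ∀ x : torsKer φ, e (QuotientAddGroup.mk x) =
        QuotientAddGroup.mk (⟨(x : D), AddMonoidHom.mem_ker.mpr x.2.1⟩ : φ.ker) := by
  classical
  let ι : torsKer φ →+ φ.ker :=
    AddMonoidHom.codRestrict (torsKer φ).subtype φ.ker
      (fun x => AddMonoidHom.mem_ker.mpr x.2.1)
  let f : torsKer φ →+ φ.ker ⧸ zsmulSub N φ.ker :=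
    (QuotientAddGroup.mk' (zsmulSub N φ.ker)).comp ι
  have hker : ∀ x ∈ zsmulSub N (torsKer φ), f x = 0 := by
    rintro x ⟨y, hy⟩
    have h1 : ι x = N • ι y := by
      ext
      simp only [ι, AddMonoidHom.codRestrict_apply, AddSubgroup.coe_subtype]
      rw [← hy]
      rfl
    show QuotientAddGroup.mk (ι x) = 0
    rw [QuotientAddGroup.eq_zero_iff]
    exact ⟨ι y, h1.symm⟩
  let F := QuotientAddGroup.lift (zsmulSub N (torsKer φ)) f hker
  have hF : ∀ x : torsKer φ, F (QuotientAddGroup.mk x) = QuotientAddGroup.mk (ι x) :=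
    fun x => rfl
  have hinj : Function.Injective F := by
    rw [injective_iff_map_eq_zero]
    intro q hq
    induction q using QuotientAddGroup.induction_on with
    | H x =>
      rw [hF, QuotientAddGroup.eq_zero_iff] at hq
      obtain ⟨k, hk⟩ := hq
      have hNk : N • (k : D) = (x : D) := congrArg Subtype.val hk
      obtain ⟨hx0, m, hm, hmx⟩ := x.2
      have hz : ((m : ℤ) * N) • (k : D) = 0 := by
        rw [mul_smul, hNk, natCast_zsmul, hmx]
      have hk_tors : (k : D) ∈ torsKer φ := by
        refine ⟨AddMonoidHom.mem_ker.mp k.2, ((m : ℤ) * N).natAbs,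
          Int.natAbs_ne_zero.mpr (mul_ne_zero (by exact_mod_cast hm) hN), ?_⟩
        rcases Int.natAbs_eq ((m : ℤ) * N) with h | h
        · rw [← natCast_zsmul, ← h, hz]
        · rw [← natCast_zsmul, show ((((m : ℤ) * N).natAbs : ℤ)) = -((m : ℤ) * N) by
            linarith, neg_smul, hz, neg_zero]
      rw [QuotientAddGroup.eq_zero_iff]
      exact ⟨⟨(k : D), hk_tors⟩, by ext; exact hNk⟩
  have hsurj : Function.Surjective F := by
    intro q
    induction q using QuotientAddGroup.induction_on with
    | H x =>
      obtain ⟨y, hy⟩ := hD (x : D) N hN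
      have hφy : N • φ y = 0 := by
        rw [← map_zsmul, hy, AddMonoidHom.mem_ker.mp x.2]
      have htor : ∃ n : ℕ, n ≠ 0 ∧ n • φ y = 0 := by
        refine ⟨N.natAbs, Int.natAbs_ne_zero.mpr hN, ?_⟩
        rcases Int.natAbs_eq N with h | h
        · rw [← natCast_zsmul, ← h, hφy]
        · rw [← natCast_zsmul, show ((N.natAbs : ℤ)) = -N by linarith, neg_smul, hφy,
            neg_zero]
      obtain ⟨d, ⟨nd, hnd, hndd⟩, hφd⟩ := htors (φ y) htor
      have ht : N • d ∈ torsKer φ := by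
        refine ⟨by rw [map_zsmul, hφd, hφy], nd, hnd, ?_⟩
        rw [smul_comm, hndd, smul_zero]
      refine ⟨QuotientAddGroup.mk (⟨N • d, ht⟩ : torsKer φ), ?_⟩
      rw [hF]
      apply (QuotientAddGroup.eq).mpr
      have hyd : y - d ∈ φ.ker := by
        rw [AddMonoidHom.mem_ker, map_sub, hφd, sub_self]
      refine ⟨⟨y - d, hyd⟩, ?_⟩
      ext
      show N • (y - d) = -(N • d) + (x : D)
      rw [smul_sub, hy]
      abel
  refine ⟨AddEquiv.ofBijective F ⟨hinj, hsurj⟩, fun x => ?_⟩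
  exact hF x
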